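/- Let f : ℝⁿ → ℝ be C^1 on an open set U, let x̄ ∈ U be a local minimum of f over the closed ball B_δ(x̄) ⊆ U, and suppose x_k → x̄ is a sequence with f(x_k) − f(x̄) < ε_k for positive numbers ε_k. Then for any λ_k > 0 there exist points x'_k ∈ B_δ(x̄) with ‖x'_k − x_k‖ ≤ λ_k, f(x̄) ≤ f(x'_k) ≤ f(x_k), and ‖∇f(x'_k)‖ ≤ ε_k/λ_k whenever x'_k lies in the interior of B_δ(x̄). -/

import Mathlib

open Filter Metric Set Topology

/-- Ekeland-type lemma: if `xbar` minimizes the `C¹` function `f` over the closed ball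
`B_δ(xbar)` and `f(x_k) - f(xbar) < ε_k`, then for any `λ_k > 0` there are points `x'_k` in
the ball with `‖x'_k - x_k‖ ≤ λ_k`, `f(xbar) ≤ f(x'_k) ≤ f(x_k)`, and
`‖∇f(x'_k)‖ ≤ ε_k/λ_k` whenever `x'_k` is interior. -/
theorem stmt_16 {n : ℕ} (f : EuclideanSpace ℝ (Fin n) → ℝ)
    (U : Set (EuclideanSpace ℝ (Fin n))) (hU : IsOpen U)
    (xbar : EuclideanSpace ℝ (Fin n)) (δ : ℝ) (hδ : 0 < δ)
    (hball : Metric.closedBall xbar δ ⊆ U) (hf : ContDiffOn ℝ 1 f U)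
    (hmin : ∀ x ∈ Metric.closedBall xbar δ, f xbar ≤ f x)
    (x : ℕ → EuclideanSpace ℝ (Fin n)) (ε : ℕ → ℝ)
    (hx : ∀ k, x k ∈ Metric.closedBall xbar δ)
    (hxlim : Filter.Tendsto x atTop (𝓝 xbar))
    (hε : ∀ k, 0 < ε k) (hfx : ∀ k, f (x k) - f xbar < ε k) :
    ∀ lam : ℕ → ℝ, (∀ k, 0 < lam k) →
      ∃ x' : ℕ → EuclideanSpace ℝ (Fin n), ∀ k,
        x' k ∈ Metric.closedBall xbar δ ∧
        ‖x' k - x k‖ ≤ lam k ∧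
        f xbar ≤ f (x' k) ∧ f (x' k) ≤ f (x k) ∧
        (x' k ∈ Metric.ball xbar δ → ‖gradient f (x' k)‖ ≤ ε k / lam k) := by
  intro lam hlam
  have key : ∀ k, ∃ y, y ∈ Metric.closedBall xbar δ ∧ ‖y - x k‖ ≤ lam k ∧
      f xbar ≤ f y ∧ f y ≤ f (x k) ∧
      (y ∈ Metric.ball xbar δ → ‖gradient f y‖ ≤ ε k / lam k) := by
    intro k
    set c : ℝ := ε k / lam k with hc
    have hcpos : 0 < c := div_pos (hε k) (hlam k)
    have hclam : c * lam k = ε k := div_mul_cancel₀ _ (ne_of_gt (hlam k))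
    have hcont : ContinuousOn (fun y => f y + c * ‖y - x k‖) (Metric.closedBall xbar δ) := by
      refine ContinuousOn.add ((hf.continuousOn).mono hball) ?_
      exact (continuous_const.mul ((continuous_id.sub continuous_const).norm)).continuousOn
    obtain ⟨y, hyK, hymin⟩ := (isCompact_closedBall xbar δ).exists_isMinOn ⟨x k, hx k⟩ hcont
    have h1 : f y + c * ‖y - x k‖ ≤ f (x k) := by
      have := isMinOn_iff.mp hymin (x k) (hx k)
      simpa using this
    have hfyb : f xbar ≤ f y := hmin y hyK
    have hnn : (0:ℝ) ≤ ‖y - x k‖ := norm_nonneg _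
    have hnorm : ‖y - x k‖ ≤ lam k := by
      have h2 : c * ‖y - x k‖ < ε k := by linarith [hfx k]
      nlinarith
    have hfy_le : f y ≤ f (x k) := by nlinarith
    refine ⟨y, hyK, hnorm, hfyb, hfy_le, ?_⟩
    intro hyint
    have hUy : U ∈ 𝓝 y := hU.mem_nhds (hball (Metric.ball_subset_closedBall hyint))
    have hdiff : DifferentiableAt ℝ f y := ((hf.contDiffAt hUy).differentiableAt one_ne_zero)
    have hgrad : HasGradientAt f (gradient f y) y := hdiff.hasGradientAt
    set G := gradient f y with hGdef
    by_cases hG : G = 0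
    · rw [hG, norm_zero]; exact hcpos.le
    have hGn : ‖G‖ ≠ 0 := norm_ne_zero_iff.mpr hG
    set v : EuclideanSpace ℝ (Fin n) := -(‖G‖⁻¹ • G) with hvdef
    have hvnorm : ‖v‖ = 1 := by
      rw [hvdef, norm_neg, norm_smul, norm_inv, norm_norm]
      field_simp
    have hL : HasDerivAt (fun t : ℝ => y + t • v) v 0 := by
      simpa using ((hasDerivAt_id (0:ℝ)).smul_const v).const_add y
    have hF : HasFDerivAt f (InnerProductSpace.toDual ℝ _ G) y := hgrad.hasFDerivAt
    have hF' : HasFDerivAt f (InnerProductSpace.toDual ℝ _ G) ((fun t : ℝ => y + t • v) 0) := by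
      simpa using hF
    have hφ : HasDerivAt (fun t : ℝ => f (y + t • v)) (inner ℝ G v : ℝ) 0 := by
      have := hF'.comp_hasDerivAt (0:ℝ) hL
      have h2 : HasDerivAt (f ∘ fun t : ℝ => y + t • v) (inner ℝ G v) 0 := by
        simpa [InnerProductSpace.toDual_apply_apply] using this
      exact h2
    have hslope : Tendsto (slope (fun t : ℝ => f (y + t • v)) 0) (𝓝[>] (0:ℝ))
        (𝓝 (inner ℝ G v : ℝ)) := by
      have h := hasDerivAt_iff_tendsto_slope.mp hφ
      exact h.mono_left (nhdsWithin_mono _ (fun t ht => ne_of_gt ht))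
    have hr : 0 < δ - dist y xbar := by
      have := Metric.mem_ball.mp hyint; linarith
    have hev : ∀ᶠ t in 𝓝[>] (0:ℝ), -c ≤ slope (fun t : ℝ => f (y + t • v)) 0 t := by
      filter_upwards [Ioo_mem_nhdsGT_of_mem (left_mem_Ico.mpr hr)] with t ht
      obtain ⟨ht0, htr⟩ := ht
      have htv : ‖t • v‖ = t := by
        rw [norm_smul, hvnorm, mul_one, Real.norm_eq_abs, abs_of_pos ht0]
      have hmem : y + t • v ∈ Metric.closedBall xbar δ := by
        have hd : dist (y + t • v) xbar ≤ ‖t • v‖ + dist y xbar := by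
          calc dist (y + t • v) xbar ≤ dist (y + t • v) y + dist y xbar := dist_triangle _ _ _
            _ = ‖t • v‖ + dist y xbar := by rw [dist_eq_norm, add_sub_cancel_left]
        rw [Metric.mem_closedBall]
        rw [htv] at hd
        linarith
      have h2 : f y + c * ‖y - x k‖ ≤ f (y + t • v) + c * ‖y + t • v - x k‖ :=
        isMinOn_iff.mp hymin _ hmem
      have h3 : ‖y + t • v - x k‖ ≤ ‖y - x k‖ + t := by
        have : y + t • v - x k = (y - x k) + t • v := by abel
        rw [this]
        calc ‖(y - x k) + t • v‖ ≤ ‖y - x k‖ + ‖t • v‖ := norm_add_le _ _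
          _ = ‖y - x k‖ + t := by rw [htv]
      have h4 : -(c * t) ≤ f (y + t • v) - f y := by nlinarith
      rw [slope_def_field]
      simp only [zero_smul, add_zero, sub_zero]
      rw [le_div_iff₀ ht0]
      linarith
    have hfinal : -c ≤ (inner ℝ G v : ℝ) := ge_of_tendsto hslope hev
    have hinner : (inner ℝ G v : ℝ) = -‖G‖ := by
      rw [hvdef, inner_neg_right, real_inner_smul_right, real_inner_self_eq_norm_mul_norm]
      field_simp
    rw [hinner] at hfinal
    linarith
  choose x' hx' using key
  exact ⟨x', hx'⟩
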